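/- Let k and m be positive integers, let ζ_k = exp(2πi/k), and let H be a Butson Hadamard matrix in BH(mk, k) whose first k rows equal F_k ⊗ j_m; that is, for 0 ≤ i ≤ k−1 and 0 ≤ c ≤ k−1, every entry of H in row i and in the c-th block of m consecutive columns equals ζ_k^{ic}. Then for every block index c₀ ∈ {0,…,k−1} and every k-th root of unity ω, the matrix K obtained from H by multiplying each entry lying simultaneously in the first k rows and in the c₀-th block of m consecutive columns by ω is again a Butson Hadamard matrix in BH(mk, k). -/

import Mathlib

/-- Switching a Fourier set: if `H ∈ BH(mk, k)` has its first `k` rows equal to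
`F_k ⊗ j_m`, then multiplying the entries lying in the first `k` rows and the
`c₀`-th block of `m` columns by a `k`-th root of unity `ω` yields a matrix in
`BH(mk, k)`. Rows are indexed by `Fin k ⊕ Fin ((m-1)*k)` (first `k` rows, then the
rest) and columns by `Fin k × Fin m` (block index, position within the block). -/
theorem stmt_0 (k m : ℕ) (hk : 0 < k) (hm : 0 < m)
    (ζ : ℂ) (hζ : ζ = Complex.exp (2 * Real.pi * Complex.I / k))
    (H : Matrix (Fin k ⊕ Fin ((m - 1) * k)) (Fin k × Fin m) ℂ)
    (hent : ∀ r c, H r c ^ k = 1)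
    (hHad : H * H.conjTranspose = ((m * k : ℕ) : ℂ) • 1)
    (hrows : ∀ (i : Fin k) (c : Fin k) (j : Fin m),
      H (Sum.inl i) (c, j) = ζ ^ ((i : ℕ) * (c : ℕ)))
    (c₀ : Fin k) (ω : ℂ) (hω : ω ^ k = 1)
    (K : Matrix (Fin k ⊕ Fin ((m - 1) * k)) (Fin k × Fin m) ℂ)
    (hK₁ : ∀ (i : Fin k) (c : Fin k) (j : Fin m),
      K (Sum.inl i) (c, j) = if c = c₀ then ω * H (Sum.inl i) (c, j) else H (Sum.inl i) (c, j))
    (hK₂ : ∀ (r : Fin ((m - 1) * k)) (c : Fin k × Fin m), K (Sum.inr r) c = H (Sum.inr r) c) :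
    (∀ r c, K r c ^ k = 1) ∧ K * K.conjTranspose = ((m * k : ℕ) : ℂ) • 1 := by
  have hkC : (k : ℂ) ≠ 0 := Nat.cast_ne_zero.mpr hk.ne'
  have hprim : IsPrimitiveRoot ζ k := hζ ▸ Complex.isPrimitiveRoot_exp k hk.ne'
  have hζk : ζ ^ k = 1 := hprim.pow_eq_one
  have habs : ‖ω‖ = 1 := by
    have h := congrArg (‖·‖) hω
    rw [norm_pow, norm_one] at h
    rcases pow_eq_one_iff_cases.mp h with h | h | h
    · omega
    · exact h
    · nlinarith [norm_nonneg ω, h.1]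
  have hωc : ω * (starRingEnd ℂ) ω = 1 := by
    rw [Complex.mul_conj, Complex.normSq_eq_norm_sq, habs]; norm_num
  -- geometric sums of powers of ζ
  have hgeom : ∀ d : ℕ, ∑ i : Fin k, (ζ ^ d) ^ (i : ℕ) = if k ∣ d then (k : ℂ) else 0 := by
    intro d
    by_cases hd : k ∣ d
    · rw [if_pos hd]
      obtain ⟨t, rfl⟩ := hd
      rw [pow_mul, hζk, one_pow]
      simp
    · rw [if_neg hd]
      have hne : ζ ^ d ≠ 1 := fun h => hd ((hprim.pow_eq_one_iff_dvd d).mp h)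
      rw [Fin.sum_univ_eq_sum_range (fun i => (ζ ^ d) ^ i) k, geom_sum_eq hne]
      rw [← pow_mul, mul_comm d k, pow_mul, hζk, one_pow]
      simp
  -- column block sums of the lower rows vanish
  have hcol : ∀ (s : Fin ((m - 1) * k)) (c' : Fin k),
      ∑ j : Fin m, (starRingEnd ℂ) (H (Sum.inr s) (c', j)) = 0 := by
    intro s c'
    have hoff : ∀ i : Fin k,
        ∑ c : Fin k, ζ ^ ((i : ℕ) * c) *
          (∑ j : Fin m, (starRingEnd ℂ) (H (Sum.inr s) (c, j))) = 0 := by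
      intro i
      have h := congrFun (congrFun hHad (Sum.inl i)) (Sum.inr s)
      rw [Matrix.mul_apply] at h
      simp only [Matrix.smul_apply, Matrix.one_apply_ne (by simp : (Sum.inl i : Fin k ⊕ Fin ((m-1)*k)) ≠ Sum.inr s), smul_zero] at h
      rw [Fintype.sum_prod_type] at h
      calc ∑ c : Fin k, ζ ^ ((i : ℕ) * c) *
              (∑ j : Fin m, (starRingEnd ℂ) (H (Sum.inr s) (c, j)))
          = ∑ c : Fin k, ∑ j : Fin m,
              H (Sum.inl i) (c, j) * H.conjTranspose (c, j) (Sum.inr s) := by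
            refine Finset.sum_congr rfl fun c _ => ?_
            rw [Finset.mul_sum]
            refine Finset.sum_congr rfl fun j _ => ?_
            rw [hrows, Matrix.conjTranspose_apply, starRingEnd_apply]
        _ = 0 := h
    have key : ∑ c : Fin k,
        (if k ∣ (k - (c' : ℕ) + (c : ℕ)) then (k : ℂ) else 0) *
          (∑ j : Fin m, (starRingEnd ℂ) (H (Sum.inr s) (c, j))) = 0 := by
      calc ∑ c : Fin k,
          (if k ∣ (k - (c' : ℕ) + (c : ℕ)) then (k : ℂ) else 0) *
            (∑ j : Fin m, (starRingEnd ℂ) (H (Sum.inr s) (c, j)))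
          = ∑ c : Fin k, (∑ i : Fin k, (ζ ^ (k - (c' : ℕ) + (c : ℕ))) ^ (i : ℕ)) *
              (∑ j : Fin m, (starRingEnd ℂ) (H (Sum.inr s) (c, j))) := by
            refine Finset.sum_congr rfl fun c _ => ?_
            rw [hgeom]
        _ = ∑ c : Fin k, ∑ i : Fin k, (ζ ^ (k - (c' : ℕ) + (c : ℕ))) ^ (i : ℕ) *
              (∑ j : Fin m, (starRingEnd ℂ) (H (Sum.inr s) (c, j))) := by
            exact Finset.sum_congr rfl fun c _ => Finset.sum_mul _ _ _
        _ = ∑ i : Fin k, ∑ c : Fin k, (ζ ^ (k - (c' : ℕ) + (c : ℕ))) ^ (i : ℕ) *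
              (∑ j : Fin m, (starRingEnd ℂ) (H (Sum.inr s) (c, j))) := Finset.sum_comm
        _ = ∑ i : Fin k, ζ ^ ((k - (c' : ℕ)) * (i : ℕ)) *
              ∑ c : Fin k, ζ ^ ((i : ℕ) * c) *
                (∑ j : Fin m, (starRingEnd ℂ) (H (Sum.inr s) (c, j))) := by
            refine Finset.sum_congr rfl fun i _ => ?_
            rw [Finset.mul_sum]
            refine Finset.sum_congr rfl fun c _ => ?_
            rw [← pow_mul, show (k - (c' : ℕ) + (c : ℕ)) * (i : ℕ)
                  = (k - (c' : ℕ)) * (i : ℕ) + (i : ℕ) * (c : ℕ) by ring,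
              pow_add, mul_assoc]
        _ = 0 := by simp [hoff]
    rw [Finset.sum_eq_single c'] at key
    · rw [if_pos (by exact ⟨1, by omega⟩ : k ∣ (k - (c' : ℕ) + (c' : ℕ)))] at key
      exact (mul_eq_zero.mp key).resolve_left hkC
    · intro c _ hne
      rw [if_neg, zero_mul]
      intro hdvd
      have hc' := c'.isLt
      have hc := c.isLt
      have hpos : 0 < k - (c' : ℕ) + (c : ℕ) := by omega
      have hle : k ≤ k - (c' : ℕ) + (c : ℕ) := Nat.le_of_dvd hpos hdvd
      have h2 : k ∣ (k - (c' : ℕ) + (c : ℕ) - k) := (Nat.dvd_sub hdvd dvd_rfl)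
      have h3 : k - (c' : ℕ) + (c : ℕ) - k < k := by omega
      have h4 := Nat.eq_zero_of_dvd_of_lt h2 h3
      exact hne (Fin.ext (by omega))
    · intro h; exact absurd (Finset.mem_univ c') h
  have hcol' : ∀ (s : Fin ((m - 1) * k)) (c' : Fin k),
      ∑ j : Fin m, H (Sum.inr s) (c', j) = 0 := by
    intro s c'
    have := congrArg (starRingEnd ℂ) (hcol s c')
    simpa using this
  constructor
  · intro r c
    rcases r with i | s
    · obtain ⟨c1, j⟩ := c
      rw [hK₁]
      split_ifs
      · rw [mul_pow, hω, one_mul]; exact hent _ _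
      · exact hent _ _
    · rw [hK₂]; exact hent _ _
  · have : K * K.conjTranspose = H * H.conjTranspose := by
      ext r r'
      rw [Matrix.mul_apply, Matrix.mul_apply]
      simp only [Matrix.conjTranspose_apply, ← starRingEnd_apply]
      rcases r with i | s <;> rcases r' with i' | s'
      · refine Finset.sum_congr rfl fun x _ => ?_
        obtain ⟨c, j⟩ := x
        rw [hK₁, hK₁]
        split_ifs with h
        · rw [map_mul, mul_mul_mul_comm, hωc, one_mul]
        · rfl
      · rw [← sub_eq_zero, ← Finset.sum_sub_distrib, Fintype.sum_prod_type]
        refine Finset.sum_eq_zero fun c _ => ?_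
        by_cases h : c = c₀
        · subst h
          calc ∑ j : Fin m, (K (Sum.inl i) (c, j) * (starRingEnd ℂ) (K (Sum.inr s') (c, j)) -
                  H (Sum.inl i) (c, j) * (starRingEnd ℂ) (H (Sum.inr s') (c, j)))
              = ((ω - 1) * ζ ^ ((i : ℕ) * (c : ℕ))) *
                  ∑ j : Fin m, (starRingEnd ℂ) (H (Sum.inr s') (c, j)) := by
                rw [Finset.mul_sum]
                refine Finset.sum_congr rfl fun j _ => ?_
                rw [hK₁, if_pos rfl, hK₂, hrows]
                ring
            _ = 0 := by rw [hcol]; ring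
        · refine Finset.sum_eq_zero fun j _ => ?_
          rw [hK₁, if_neg h, hK₂, sub_self]
      · rw [← sub_eq_zero, ← Finset.sum_sub_distrib, Fintype.sum_prod_type]
        refine Finset.sum_eq_zero fun c _ => ?_
        by_cases h : c = c₀
        · subst h
          calc ∑ j : Fin m, (K (Sum.inr s) (c, j) * (starRingEnd ℂ) (K (Sum.inl i') (c, j)) -
                  H (Sum.inr s) (c, j) * (starRingEnd ℂ) (H (Sum.inl i') (c, j)))
              = (((starRingEnd ℂ) ω - 1) * (starRingEnd ℂ) (ζ ^ ((i' : ℕ) * (c : ℕ)))) *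
                  ∑ j : Fin m, H (Sum.inr s) (c, j) := by
                rw [Finset.mul_sum]
                refine Finset.sum_congr rfl fun j _ => ?_
                rw [hK₁, if_pos rfl, hK₂, hrows, map_mul]
                ring
            _ = 0 := by rw [hcol']; ring
        · refine Finset.sum_eq_zero fun j _ => ?_
          rw [hK₁, if_neg h, hK₂, sub_self]
      · refine Finset.sum_congr rfl fun x _ => ?_
        rw [hK₂, hK₂]
    rw [this, hHad]
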